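/- Let (X, ρ) be an extended metric space and for each n ∈ ℕ let V_n ⊆ X and a_n, b_n, r_n ≥ 0. Assume for every n that every class of the 6a_n-walk equivalence relation on V_n has diameter at most b_n, and that a_n ≥ r_n + Σ_{k<n} (4a_k + b_k). Then there exist sets U_n ⊇ V_n such that: for every n, U_n is contained in the a_n-neighborhood of V_n (so in particular the r_n-walk relation on U_n has uniformly bounded classes), and whenever n < m and x ∈ U_n, the closed ball B(x; r_n) is either disjoint from U_m or contained in U_m. -/

import Mathlib

open scoped ENNReal NNReal

/-- The `s`-walk equivalence relation on `U`. -/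
def walkRel {X : Type*} [EMetricSpace X] (U : Set X) (s : ℝ≥0∞) : X → X → Prop :=
  Relation.EqvGen fun a b => a ∈ U ∧ b ∈ U ∧ edist a b ≤ s

namespace Stmt11Proof

open Set

variable {X : Type*} [EMetricSpace X]

/-- one-sided closed neighborhood of a set -/
def nbhd (S : Set X) (t : ℝ≥0∞) : Set X := {y | ∃ s ∈ S, edist s y ≤ t}

lemma subset_nbhd {S : Set X} {t : ℝ≥0∞} : S ⊆ nbhd S t := fun y hy =>
  ⟨y, hy, by simp [edist_self]⟩

lemma nbhd_nbhd {S : Set X} {t₁ t₂ : ℝ≥0∞} : nbhd (nbhd S t₁) t₂ ⊆ nbhd S (t₁ + t₂) := by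
  rintro y ⟨s, ⟨p, hp, hps⟩, hsy⟩
  exact ⟨p, hp, le_trans (edist_triangle _ _ _) (add_le_add hps hsy)⟩

lemma nbhd_mono {S T : Set X} {t t' : ℝ≥0∞} (hST : S ⊆ T) (ht : t ≤ t') :
    nbhd S t ⊆ nbhd T t' := fun y => fun ⟨s, hs, h⟩ => ⟨s, hST hs, le_trans h ht⟩

variable (a b r : ℕ → ℝ≥0)

noncomputable def cE (k : ℕ) : ℝ≥0∞ := ((4 * a k + b k : ℝ≥0) : ℝ≥0∞)

noncomputable def DE (j : ℕ) : ℝ≥0∞ := ∑ k ∈ Finset.range j, cE a b k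

lemma DE_succ (j : ℕ) : DE a b (j + 1) = DE a b j + cE a b j := Finset.sum_range_succ _ _

lemma cE_le_DE {k j : ℕ} (h : k < j) : cE a b k ≤ DE a b j :=
  Finset.single_le_sum (fun i _ => zero_le) (Finset.mem_range.2 h)

/-- the bridged relation generating walk classes at level `j` -/
def rel (f : ℕ → Set X) (j : ℕ) (p q : X) : Prop :=
  p ∈ f j ∧ q ∈ f j ∧ ∃ S : Set X, EMetric.diam S ≤ DE a b j ∧
    (∃ s ∈ S, edist p s ≤ ((r j : ℝ≥0) : ℝ≥0∞)) ∧ (∃ s ∈ S, edist s q ≤ ((r j : ℝ≥0) : ℝ≥0∞))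

def wclass (f : ℕ → Set X) (j : ℕ) (w : X) : Set X :=
  {y | Relation.EqvGen (rel a b r f j) w y}

def pieceB (f : ℕ → Set X) (j : ℕ) (w : X) : Set X :=
  nbhd (wclass a b r f j w) ((r j : ℝ≥0) : ℝ≥0∞)

def Cl (f : ℕ → Set X) : ℕ → Set X → Set X
  | 0, Z => Z
  | (j+1), Z =>
    Cl f j (Z ∪ ⋃ w ∈ {w | w ∈ f j ∧ (Cl f j (pieceB a b r f j w) ∩ Z).Nonempty},
      Cl f j (pieceB a b r f j w))

def piece (f : ℕ → Set X) (j : ℕ) (w : X) : Set X :=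
  Cl a b r f j (pieceB a b r f j w)

def absorb (f : ℕ → Set X) (j : ℕ) (Z : Set X) : Set X :=
  Z ∪ ⋃ w ∈ {w | w ∈ f j ∧ (piece a b r f j w ∩ Z).Nonempty}, piece a b r f j w

lemma Cl_zero (f : ℕ → Set X) (Z : Set X) : Cl a b r f 0 Z = Z := rfl

lemma Cl_succ (f : ℕ → Set X) (j : ℕ) (Z : Set X) :
    Cl a b r f (j+1) Z = Cl a b r f j (absorb a b r f j Z) := rfl

lemma mem_absorb {f : ℕ → Set X} {j : ℕ} {Z : Set X} {e : X} :
    e ∈ absorb a b r f j Z ↔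
      e ∈ Z ∨ ∃ w, w ∈ f j ∧ (piece a b r f j w ∩ Z).Nonempty ∧ e ∈ piece a b r f j w := by
  simp only [absorb, Set.mem_union, Set.mem_iUnion, Set.mem_setOf_eq, exists_prop]
  tauto

lemma Cl_extensive (f : ℕ → Set X) : ∀ (j : ℕ) (Z : Set X), Z ⊆ Cl a b r f j Z := by
  intro j
  induction j with
  | zero => intro Z; exact le_refl _
  | succ j ih =>
    intro Z
    rw [Cl_succ]
    exact Set.Subset.trans Set.subset_union_left (ih _)

lemma piece_subset_absorb {f : ℕ → Set X} {j : ℕ} {Z : Set X} {w : X}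
    (hw : w ∈ f j) (hne : (piece a b r f j w ∩ Z).Nonempty) :
    piece a b r f j w ⊆ absorb a b r f j Z := by
  intro e he
  exact mem_absorb a b r |>.2 (Or.inr ⟨w, hw, hne, he⟩)

/-! congruence lemmas -/

lemma rel_congr {f g : ℕ → Set X} {j : ℕ} (h : f j = g j) :
    rel a b r f j = rel a b r g j := by
  unfold rel; rw [h]

lemma wclass_congr {f g : ℕ → Set X} {j : ℕ} (h : f j = g j) :
    wclass a b r f j = wclass a b r g j := by
  unfold wclass; rw [rel_congr a b r h]

lemma pieceB_congr {f g : ℕ → Set X} {j : ℕ} (h : f j = g j) :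
    pieceB a b r f j = pieceB a b r g j := by
  unfold pieceB; rw [wclass_congr a b r h]

lemma Cl_congr {f g : ℕ → Set X} :
    ∀ (j : ℕ), (∀ k, k < j → f k = g k) → ∀ Z, Cl a b r f j Z = Cl a b r g j Z := by
  intro j
  induction j with
  | zero => intro _ Z; rfl
  | succ j ih =>
    intro h Z
    have hj : f j = g j := h j (Nat.lt_succ_self j)
    have hlt : ∀ k, k < j → f k = g k := fun k hk => h k (Nat.lt_trans hk (Nat.lt_succ_self j))
    have hp : ∀ w, Cl a b r f j (pieceB a b r f j w) = Cl a b r g j (pieceB a b r g j w) := by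
      intro w
      rw [pieceB_congr a b r hj]
      exact ih hlt _
    show Cl a b r f j _ = Cl a b r g j _
    rw [ih hlt]
    congr 1
    simp only [hp, hj]

/-- the buffered sets -/
def U (V : ℕ → Set X) : ℕ → Set X
  | m => Cl a b r (fun k => if h : k < m then U V k else ∅) m (nbhd (V m) ((r m : ℝ≥0) : ℝ≥0∞))
  termination_by m => m
  decreasing_by exact h

lemma U_eq (V : ℕ → Set X) (m : ℕ) :
    U a b r V m = Cl a b r (U a b r V) m (nbhd (V m) ((r m : ℝ≥0) : ℝ≥0∞)) := by
  rw [U]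
  exact Cl_congr a b r m (fun k hk => by simp [hk]) _

/-! basic facts about walk classes -/

lemma eqvgen_mem {f : ℕ → Set X} {j : ℕ} {p q : X}
    (h : Relation.EqvGen (rel a b r f j) p q) : p = q ∨ (p ∈ f j ∧ q ∈ f j) := by
  induction h with
  | rel x y hxy => exact Or.inr ⟨hxy.1, hxy.2.1⟩
  | refl x => exact Or.inl rfl
  | symm x y _ ih =>
    rcases ih with h | h
    · exact Or.inl h.symm
    · exact Or.inr ⟨h.2, h.1⟩
  | trans x y z _ _ ih₁ ih₂ =>
    rcases ih₁ with h1 | h1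
    · rcases ih₂ with h2 | h2
      · exact Or.inl (h1.trans h2)
      · exact Or.inr ⟨h1 ▸ h2.1, h2.2⟩
    · rcases ih₂ with h2 | h2
      · exact Or.inr ⟨h1.1, h2 ▸ h1.2⟩
      · exact Or.inr ⟨h1.1, h2.2⟩

lemma wclass_subset {f : ℕ → Set X} {j : ℕ} {w : X} (hw : w ∈ f j) :
    wclass a b r f j w ⊆ f j := by
  intro y hy
  rcases eqvgen_mem a b r hy with h | h
  · exact h ▸ hw
  · exact h.2

lemma mem_wclass_self {f : ℕ → Set X} {j : ℕ} {w : X} : w ∈ wclass a b r f j w :=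
  Relation.EqvGen.refl w

lemma wclass_eq {f : ℕ → Set X} {j : ℕ} {x w : X}
    (h : Relation.EqvGen (rel a b r f j) x w) :
    wclass a b r f j x = wclass a b r f j w := by
  ext y
  constructor
  · intro hy; exact Relation.EqvGen.trans _ _ _ (Relation.EqvGen.symm _ _ h) hy
  · intro hy; exact Relation.EqvGen.trans _ _ _ h hy

lemma piece_eq {f : ℕ → Set X} {j : ℕ} {x w : X}
    (h : Relation.EqvGen (rel a b r f j) x w) :
    piece a b r f j x = piece a b r f j w := by
  unfold piece pieceB
  rw [wclass_eq a b r h]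


/-! the main development -/

section Main

variable (V : ℕ → Set X)

lemma hgrow' (hg : ∀ n, r n + ∑ k ∈ Finset.range n, (4 * a k + b k) ≤ a n) (n : ℕ) :
    ((r n : ℝ≥0) : ℝ≥0∞) + DE a b n ≤ ((a n : ℝ≥0) : ℝ≥0∞) := by
  have h2 : ((r n + ∑ k ∈ Finset.range n, (4 * a k + b k) : ℝ≥0) : ℝ≥0∞)
      ≤ ((a n : ℝ≥0) : ℝ≥0∞) := ENNReal.coe_le_coe.2 (hg n)
  rw [ENNReal.coe_add, ENNReal.coe_finset_sum] at h2
  simpa [DE, cE] using h2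

lemma r_le_a (hg : ∀ n, r n + ∑ k ∈ Finset.range n, (4 * a k + b k) ≤ a n) (n : ℕ) :
    ((r n : ℝ≥0) : ℝ≥0∞) ≤ ((a n : ℝ≥0) : ℝ≥0∞) :=
  le_trans le_self_add (hgrow' a b r hg n)

lemma eqvgen_bound
    (hd : ∀ n, ∀ x y : X,
      walkRel (V n) ((6 * a n : ℝ≥0) : ℝ≥0∞) x y → edist x y ≤ ((b n : ℝ≥0) : ℝ≥0∞))
    (n : ℕ) {U' : Set X}
    (hU' : ∀ x ∈ U', ∃ v ∈ V n, edist x v ≤ ((a n : ℝ≥0) : ℝ≥0∞))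
    {rr : X → X → Prop} {t : ℝ≥0∞} (ht : t ≤ 4 * ((a n : ℝ≥0) : ℝ≥0∞))
    (hrr : ∀ p q, rr p q → p ∈ U' ∧ q ∈ U' ∧ edist p q ≤ t) :
    ∀ p q : X, Relation.EqvGen rr p q → edist p q ≤ ((2 * a n + b n : ℝ≥0) : ℝ≥0∞) := by
  set A : ℝ≥0∞ := ((a n : ℝ≥0) : ℝ≥0∞) with hA
  have hcoe6 : ((6 * a n : ℝ≥0) : ℝ≥0∞) = 6 * A := by rw [hA]; push_cast; ring
  have h2a : ∀ u v : X, u ∈ V n → v ∈ V n → edist u v ≤ A + A + t →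
      walkRel (V n) ((6 * a n : ℝ≥0) : ℝ≥0∞) u v := by
    intro u v hu hv hdis
    refine Relation.EqvGen.rel _ _ ⟨hu, hv, ?_⟩
    rw [hcoe6]
    calc edist u v ≤ A + A + t := hdis
      _ ≤ A + A + 4 * A := add_le_add le_rfl ht
      _ = 6 * A := by ring
  suffices H : ∀ p q : X, Relation.EqvGen rr p q → p = q ∨ ∃ v ∈ V n, ∃ v' ∈ V n,
      edist p v ≤ A ∧ edist q v' ≤ A ∧
      walkRel (V n) ((6 * a n : ℝ≥0) : ℝ≥0∞) v v' by
    intro p q h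
    rcases H p q h with rfl | ⟨v, hv, v', hv', hpv, hqv', hw⟩
    · simp [edist_self]
    · have hb := hd n v v' hw
      calc edist p q ≤ edist p v + edist v v' + edist v' q := edist_triangle4 p v v' q
        _ ≤ A + ((b n : ℝ≥0) : ℝ≥0∞) + A :=
            add_le_add (add_le_add hpv hb) (by rw [edist_comm]; exact hqv')
        _ = ((2 * a n + b n : ℝ≥0) : ℝ≥0∞) := by rw [hA]; push_cast; ring
  intro p q h
  induction h with
  | rel p q hpq =>
    obtain ⟨hp, hq, hdis⟩ := hrr p q hpq
    obtain ⟨v, hv, hpv⟩ := hU' p hp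
    obtain ⟨v', hv', hqv'⟩ := hU' q hq
    refine Or.inr ⟨v, hv, v', hv', hpv, hqv', h2a v v' hv hv' ?_⟩
    calc edist v v' ≤ edist v p + edist p q + edist q v' := edist_triangle4 v p q v'
      _ ≤ A + t + A := add_le_add (add_le_add (by rw [edist_comm]; exact hpv) hdis) hqv'
      _ = A + A + t := by ring
  | refl x => exact Or.inl rfl
  | symm x y _ ih =>
    rcases ih with h | ⟨v, hv, v', hv', h1, h2, hw⟩
    · exact Or.inl h.symm
    · exact Or.inr ⟨v', hv', v, hv, h2, h1, Relation.EqvGen.symm _ _ hw⟩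
  | trans x y z _ _ ih₁ ih₂ =>
    rcases ih₁ with rfl | ⟨v, hv, v', hv', hxv, hyv', hw⟩
    · exact ih₂
    · rcases ih₂ with rfl | ⟨u, hu, u', hu', hyu, hzu', hw2⟩
      · exact Or.inr ⟨v, hv, v', hv', hxv, hyv', hw⟩
      · refine Or.inr ⟨v, hv, u', hu', hxv, hzu', ?_⟩
        have hmid : walkRel (V n) ((6 * a n : ℝ≥0) : ℝ≥0∞) v' u := by
          apply h2a v' u hv' hu
          calc edist v' u ≤ edist v' y + edist y u := edist_triangle _ _ _
            _ ≤ A + A := add_le_add (by rw [edist_comm]; exact hyv') hyu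
            _ ≤ A + A + t := le_self_add
        exact Relation.EqvGen.trans _ _ _ hw (Relation.EqvGen.trans _ _ _ hmid hw2)

def Qstmt (j : ℕ) : Prop :=
  ∀ z ∈ U a b r V j, ∀ e ∈ piece a b r (U a b r V) j z,
    ∀ e' ∈ piece a b r (U a b r V) j z, edist e e' ≤ cE a b j

lemma rad_of_q : ∀ j, (∀ k, k < j → Qstmt a b r V k) →
    ∀ Z, Cl a b r (U a b r V) j Z ⊆ nbhd Z (DE a b j) := by
  intro j
  induction j with
  | zero => intro _ Z e he; rw [Cl_zero] at he; exact subset_nbhd he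
  | succ j ih =>
    intro hQ Z
    have h1 := ih (fun k hk => hQ k (Nat.lt_trans hk (Nat.lt_succ_self j)))
      (absorb a b r (U a b r V) j Z)
    have h2 : absorb a b r (U a b r V) j Z ⊆ nbhd Z (cE a b j) := by
      intro e he
      rcases (mem_absorb a b r).1 he with hZ | ⟨w, hw, ⟨s, hs1, hs2⟩, hew⟩
      · exact subset_nbhd hZ
      · exact ⟨s, hs2, hQ j (Nat.lt_succ_self j) w hw s hs1 e hew⟩
    intro e he
    rw [Cl_succ] at he
    have he2 := nbhd_mono h2 le_rfl (h1 he)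
    have he3 := nbhd_nbhd he2
    rw [DE_succ, add_comm (DE a b j) (cE a b j)]
    exact he3

lemma uRad_of_q (hg : ∀ n, r n + ∑ k ∈ Finset.range n, (4 * a k + b k) ≤ a n)
    (j : ℕ) (hQ : ∀ k, k < j → Qstmt a b r V k) :
    U a b r V j ⊆ nbhd (V j) ((a j : ℝ≥0) : ℝ≥0∞) := by
  intro x hx
  rw [U_eq] at hx
  have h1 := rad_of_q a b r V j hQ _ hx
  exact nbhd_mono (Set.Subset.refl _) (hgrow' a b r hg j) (nbhd_nbhd h1)

lemma class_diam
    (hd : ∀ n, ∀ x y : X,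
      walkRel (V n) ((6 * a n : ℝ≥0) : ℝ≥0∞) x y → edist x y ≤ ((b n : ℝ≥0) : ℝ≥0∞))
    (hg : ∀ n, r n + ∑ k ∈ Finset.range n, (4 * a k + b k) ≤ a n)
    (j : ℕ) (hQ : ∀ k, k < j → Qstmt a b r V k) {z : X} (hz : z ∈ U a b r V j)
    {p p' : X} (hp : p ∈ wclass a b r (U a b r V) j z)
    (hp' : p' ∈ wclass a b r (U a b r V) j z) :
    edist p p' ≤ ((2 * a j + b j : ℝ≥0) : ℝ≥0∞) := by
  have hU' : ∀ x ∈ U a b r V j, ∃ v ∈ V j, edist x v ≤ ((a j : ℝ≥0) : ℝ≥0∞) := by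
    intro x hx
    obtain ⟨v, hv, hvx⟩ := uRad_of_q a b r V hg j hQ hx
    exact ⟨v, hv, by rw [edist_comm]; exact hvx⟩
  have ht : ((r j : ℝ≥0) : ℝ≥0∞) + DE a b j + ((r j : ℝ≥0) : ℝ≥0∞)
      ≤ 4 * ((a j : ℝ≥0) : ℝ≥0∞) := by
    have h1 := hgrow' a b r hg j
    have hr := r_le_a a b r hg j
    calc ((r j : ℝ≥0) : ℝ≥0∞) + DE a b j + ((r j : ℝ≥0) : ℝ≥0∞)
        ≤ ((a j : ℝ≥0) : ℝ≥0∞) + ((a j : ℝ≥0) : ℝ≥0∞) := add_le_add h1 hr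
      _ ≤ 4 * ((a j : ℝ≥0) : ℝ≥0∞) := by
          calc ((a j : ℝ≥0) : ℝ≥0∞) + ((a j : ℝ≥0) : ℝ≥0∞)
              ≤ ((a j : ℝ≥0) : ℝ≥0∞) + ((a j : ℝ≥0) : ℝ≥0∞)
                + (((a j : ℝ≥0) : ℝ≥0∞) + ((a j : ℝ≥0) : ℝ≥0∞)) := le_self_add
            _ = 4 * ((a j : ℝ≥0) : ℝ≥0∞) := by ring
  have hrr : ∀ u v : X, rel a b r (U a b r V) j u v →
      u ∈ U a b r V j ∧ v ∈ U a b r V j ∧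
      edist u v ≤ ((r j : ℝ≥0) : ℝ≥0∞) + DE a b j + ((r j : ℝ≥0) : ℝ≥0∞) := by
    rintro u v ⟨hu, hv, S, hdS, ⟨s, hsS, hus⟩, ⟨s', hs'S, hs'v⟩⟩
    refine ⟨hu, hv, ?_⟩
    calc edist u v ≤ edist u s + edist s s' + edist s' v := edist_triangle4 _ _ _ _
      _ ≤ ((r j : ℝ≥0) : ℝ≥0∞) + DE a b j + ((r j : ℝ≥0) : ℝ≥0∞) :=
          add_le_add (add_le_add hus ((EMetric.edist_le_diam_of_mem hsS hs'S).trans hdS)) hs'v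
  exact eqvgen_bound a b V hd j hU' ht hrr p p'
    (Relation.EqvGen.trans _ _ _ (Relation.EqvGen.symm _ _ hp) hp')

lemma q_all
    (hd : ∀ n, ∀ x y : X,
      walkRel (V n) ((6 * a n : ℝ≥0) : ℝ≥0∞) x y → edist x y ≤ ((b n : ℝ≥0) : ℝ≥0∞))
    (hg : ∀ n, r n + ∑ k ∈ Finset.range n, (4 * a k + b k) ≤ a n) :
    ∀ j, Qstmt a b r V j := by
  intro j
  induction j using Nat.strong_induction_on with
  | _ j ih =>
    intro z hz e he e' he'
    have hrad := rad_of_q a b r V j ih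
    obtain ⟨s, ⟨p, hp, hps⟩, hse⟩ := hrad _ he
    obtain ⟨s', ⟨p', hp', hp's'⟩, hs'e'⟩ := hrad _ he'
    have hpe : edist p e ≤ ((r j : ℝ≥0) : ℝ≥0∞) + DE a b j :=
      le_trans (edist_triangle p s e) (add_le_add hps hse)
    have hp'e' : edist p' e' ≤ ((r j : ℝ≥0) : ℝ≥0∞) + DE a b j :=
      le_trans (edist_triangle p' s' e') (add_le_add hp's' hs'e')
    have hpp' := class_diam a b r V hd hg j ih hz hp hp'
    have h1 := hgrow' a b r hg j
    calc edist e e' ≤ edist e p + edist p p' + edist p' e' := edist_triangle4 e p p' e'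
      _ ≤ (((r j : ℝ≥0) : ℝ≥0∞) + DE a b j) + ((2 * a j + b j : ℝ≥0) : ℝ≥0∞)
          + (((r j : ℝ≥0) : ℝ≥0∞) + DE a b j) :=
          add_le_add (add_le_add (by rw [edist_comm]; exact hpe) hpp') hp'e'
      _ ≤ ((a j : ℝ≥0) : ℝ≥0∞) + ((2 * a j + b j : ℝ≥0) : ℝ≥0∞) + ((a j : ℝ≥0) : ℝ≥0∞) :=
          add_le_add (add_le_add h1 le_rfl) h1
      _ = cE a b j := by simp only [cE]; push_cast; ring

def Fstmt (q : ℕ) : Prop :=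
  ∀ Z (k : ℕ) (x : X), k < q → x ∈ U a b r V k →
    (piece a b r (U a b r V) k x ∩ Cl a b r (U a b r V) q Z).Nonempty →
    piece a b r (U a b r V) k x ⊆ Cl a b r (U a b r V) q Z

lemma L1 {n : ℕ} (hF : Fstmt a b r V n) :
    ∀ j, j ≤ n → ∀ Z (x : X),
      (piece a b r (U a b r V) n x ∩ Cl a b r (U a b r V) j Z).Nonempty →
      (piece a b r (U a b r V) n x ∩ Z).Nonempty := by
  intro j
  induction j with
  | zero =>
    intro _ Z x h
    rw [Cl_zero] at h
    exact h
  | succ j ihj =>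
    intro hj Z x hne
    rw [Cl_succ] at hne
    obtain ⟨e, he, habs⟩ := ihj (Nat.le_of_succ_le hj) _ x hne
    rcases (mem_absorb a b r).1 habs with heZ | ⟨w, hw, hwZ, hew⟩
    · exact ⟨e, he, heZ⟩
    · have hsub : piece a b r (U a b r V) j w ⊆ piece a b r (U a b r V) n x :=
        hF (pieceB a b r (U a b r V) n x) j w (Nat.lt_of_succ_le hj) hw ⟨e, hew, he⟩
      obtain ⟨s, hs1, hs2⟩ := hwZ
      exact ⟨s, hsub hs1, hs2⟩

lemma L3 : ∀ j, (∀ p, p < j → Fstmt a b r V p) → ∀ Z (e : X),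
    e ∈ Cl a b r (U a b r V) j Z →
    e ∈ Z ∨ ∃ k, k < j ∧ ∃ z, z ∈ U a b r V k ∧ e ∈ piece a b r (U a b r V) k z ∧
      (piece a b r (U a b r V) k z ∩ Z).Nonempty := by
  intro j
  induction j with
  | zero => intro _ Z e he; exact Or.inl he
  | succ j ihj =>
    intro hF Z e he
    rw [Cl_succ] at he
    rcases ihj (fun p hp => hF p (Nat.lt_trans hp (Nat.lt_succ_self j))) _ e he with
      habs | ⟨k, hk, z, hz, hez, s, hs1, hs2⟩
    · rcases (mem_absorb a b r).1 habs with h | ⟨w, hw, hwZ, hew⟩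
      · exact Or.inl h
      · exact Or.inr ⟨j, Nat.lt_succ_self j, w, hw, hew, hwZ⟩
    · rcases (mem_absorb a b r).1 hs2 with hsZ | ⟨w, hw, hwZ, hsw⟩
      · exact Or.inr ⟨k, Nat.lt_trans hk (Nat.lt_succ_self j), z, hz, hez, ⟨s, hs1, hsZ⟩⟩
      · have hsub : piece a b r (U a b r V) k z ⊆ piece a b r (U a b r V) j w :=
          hF j (Nat.lt_succ_self j) (pieceB a b r (U a b r V) j w) k z hk hz ⟨s, hs1, hsw⟩
        exact Or.inr ⟨j, Nat.lt_succ_self j, w, hw, hsub hez, hwZ⟩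

lemma F4
    (hd : ∀ n, ∀ x y : X,
      walkRel (V n) ((6 * a n : ℝ≥0) : ℝ≥0∞) x y → edist x y ≤ ((b n : ℝ≥0) : ℝ≥0∞))
    (hg : ∀ n, r n + ∑ k ∈ Finset.range n, (4 * a k + b k) ≤ a n)
    (j : ℕ) (hF : ∀ p, p ≤ j → Fstmt a b r V p) {x w : X}
    (hx : x ∈ U a b r V j) (hw : w ∈ U a b r V j)
    (hne : (piece a b r (U a b r V) j x ∩ piece a b r (U a b r V) j w).Nonempty) :
    Relation.EqvGen (rel a b r (U a b r V) j) x w := by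
  obtain ⟨e, hex, hew⟩ :=
    L1 a b r V (hF j le_rfl) j le_rfl (pieceB a b r (U a b r V) j w) x hne
  obtain ⟨p', hp', hp'e⟩ := hew
  have hp'U : p' ∈ U a b r V j := wclass_subset a b r hw hp'
  have hp'g : Relation.EqvGen (rel a b r (U a b r V) j) w p' := hp'
  rcases L3 a b r V j (fun p hp => hF p (Nat.le_of_lt hp)) (pieceB a b r (U a b r V) j x)
      e hex with hB | ⟨k, hk, z, hz, hez, s₁, hs₁z, hs₁B⟩
  · obtain ⟨p, hp, hpe⟩ := hB
    have hpU : p ∈ U a b r V j := wclass_subset a b r hx hp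
    have hpg : Relation.EqvGen (rel a b r (U a b r V) j) x p := hp
    have hrel : rel a b r (U a b r V) j p p' :=
      ⟨hpU, hp'U, {e}, EMetric.diam_le (fun u hu u' hu' => by rw [Set.mem_singleton_iff.1 hu, Set.mem_singleton_iff.1 hu', edist_self]; exact zero_le), ⟨e, rfl, hpe⟩, ⟨e, rfl, by rw [edist_comm]; exact hp'e⟩⟩
    exact Relation.EqvGen.trans _ _ _ hpg (Relation.EqvGen.trans _ _ _
      (Relation.EqvGen.rel _ _ hrel) (Relation.EqvGen.symm _ _ hp'g))
  · obtain ⟨p, hp, hps₁⟩ := hs₁B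
    have hpU : p ∈ U a b r V j := wclass_subset a b r hx hp
    have hpg : Relation.EqvGen (rel a b r (U a b r V) j) x p := hp
    have hdS : EMetric.diam (piece a b r (U a b r V) k z) ≤ DE a b j := by
      refine le_trans (EMetric.diam_le ?_) (cE_le_DE a b hk)
      intro u hu u' hu'
      exact q_all a b r V hd hg k z hz u hu u' hu'
    have hrel : rel a b r (U a b r V) j p p' :=
      ⟨hpU, hp'U, piece a b r (U a b r V) k z, hdS, ⟨s₁, hs₁z, hps₁⟩,
        ⟨e, hez, by rw [edist_comm]; exact hp'e⟩⟩
    exact Relation.EqvGen.trans _ _ _ hpg (Relation.EqvGen.trans _ _ _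
      (Relation.EqvGen.rel _ _ hrel) (Relation.EqvGen.symm _ _ hp'g))

lemma f_all
    (hd : ∀ n, ∀ x y : X,
      walkRel (V n) ((6 * a n : ℝ≥0) : ℝ≥0∞) x y → edist x y ≤ ((b n : ℝ≥0) : ℝ≥0∞))
    (hg : ∀ n, r n + ∑ k ∈ Finset.range n, (4 * a k + b k) ≤ a n) :
    ∀ q, Fstmt a b r V q := by
  intro q
  induction q using Nat.strong_induction_on with
  | _ q ih =>
    cases q with
    | zero => intro Z k x hk; exact absurd hk (Nat.not_lt_zero k)
    | succ j =>
      intro Z n x hn hx hne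
      rw [Cl_succ] at hne ⊢
      rcases Nat.lt_succ_iff_lt_or_eq.1 hn with hlt | rfl
      · exact ih j (Nat.lt_succ_self j) _ n x hlt hx hne
      · obtain ⟨e, he, habs⟩ := L1 a b r V (ih n (Nat.lt_succ_self n)) n le_rfl _ x hne
        rcases (mem_absorb a b r).1 habs with heZ | ⟨w, hw, hwZ, hew⟩
        · exact Set.Subset.trans (piece_subset_absorb a b r hx ⟨e, he, heZ⟩)
            (Cl_extensive a b r _ _ _)
        · have heq := piece_eq a b r
            (F4 a b r V hd hg n (fun p hp => ih p (Nat.lt_succ_of_le hp)) hx hw ⟨e, he, hew⟩)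
          rw [heq]
          exact Set.Subset.trans (piece_subset_absorb a b r hw hwZ) (Cl_extensive a b r _ _ _)

end Main

end Stmt11Proof


/-- The buffer lemma: separating boundaries of a sequence of sets. -/
theorem stmt11 {X : Type*} [EMetricSpace X]
    (V : ℕ → Set X) (a b r : ℕ → ℝ≥0)
    (hdiam : ∀ n, ∀ x y : X,
      walkRel (V n) ((6 * a n : ℝ≥0) : ℝ≥0∞) x y → edist x y ≤ ((b n : ℝ≥0) : ℝ≥0∞))
    (hgrow : ∀ n, r n + ∑ k ∈ Finset.range n, (4 * a k + b k) ≤ a n) :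
    ∃ U : ℕ → Set X, ∀ n,
      V n ⊆ U n ∧
      U n ⊆ {x : X | ∃ v ∈ V n, edist x v ≤ ((a n : ℝ≥0) : ℝ≥0∞)} ∧
      (∃ R : ℝ≥0, ∀ x y : X, walkRel (U n) ((r n : ℝ≥0) : ℝ≥0∞) x y →
        edist x y ≤ (R : ℝ≥0∞)) ∧
      ∀ m, n < m → ∀ x ∈ U n,
        ({y : X | edist x y ≤ ((r n : ℝ≥0) : ℝ≥0∞)} ⊆ U m ∨
          ∀ y : X, edist x y ≤ ((r n : ℝ≥0) : ℝ≥0∞) → y ∉ U m) := by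
  classical
  refine ⟨Stmt11Proof.U a b r V, fun n => ⟨?_, ?_, ?_, ?_⟩⟩
  · -- V n ⊆ U n
    rw [Stmt11Proof.U_eq]
    exact Set.Subset.trans Stmt11Proof.subset_nbhd (Stmt11Proof.Cl_extensive a b r _ _ _)
  · -- U n ⊆ a_n-neighborhood
    intro x hx
    obtain ⟨v, hv, hvx⟩ := Stmt11Proof.uRad_of_q a b r V hgrow n
      (fun k _ => Stmt11Proof.q_all a b r V hdiam hgrow k) hx
    exact ⟨v, hv, by rw [edist_comm]; exact hvx⟩
  · -- bounded walk classes
    refine ⟨2 * a n + b n, fun x y h => ?_⟩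
    have hU' : ∀ x ∈ Stmt11Proof.U a b r V n, ∃ v ∈ V n,
        edist x v ≤ ((a n : ℝ≥0) : ℝ≥0∞) := by
      intro x hx
      obtain ⟨v, hv, hvx⟩ := Stmt11Proof.uRad_of_q a b r V hgrow n
        (fun k _ => Stmt11Proof.q_all a b r V hdiam hgrow k) hx
      exact ⟨v, hv, by rw [edist_comm]; exact hvx⟩
    have ht : ((r n : ℝ≥0) : ℝ≥0∞) ≤ 4 * ((a n : ℝ≥0) : ℝ≥0∞) := by
      refine le_trans (Stmt11Proof.r_le_a a b r hgrow n) ?_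
      calc ((a n : ℝ≥0) : ℝ≥0∞) ≤ ((a n : ℝ≥0) : ℝ≥0∞) + 3 * ((a n : ℝ≥0) : ℝ≥0∞) :=
            le_self_add
        _ = 4 * ((a n : ℝ≥0) : ℝ≥0∞) := by ring
    exact Stmt11Proof.eqvgen_bound a b V hdiam n hU' ht (fun p q hpq => hpq) x y h
  · -- dichotomy
    intro m hm x hx
    by_cases hne : ({y : X | edist x y ≤ ((r n : ℝ≥0) : ℝ≥0∞)} ∩ Stmt11Proof.U a b r V m).Nonempty
    · left
      have hball : {y : X | edist x y ≤ ((r n : ℝ≥0) : ℝ≥0∞)} ⊆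
          Stmt11Proof.piece a b r (Stmt11Proof.U a b r V) n x := by
        intro y hy
        exact Stmt11Proof.Cl_extensive a b r _ _ _
          ⟨x, Stmt11Proof.mem_wclass_self a b r, hy⟩
      obtain ⟨y₀, hy₁, hy₂⟩ := hne
      rw [Stmt11Proof.U_eq] at hy₂
      have hsub := Stmt11Proof.f_all a b r V hdiam hgrow m _ n x hm hx ⟨y₀, hball hy₁, hy₂⟩
      intro y hy
      rw [Stmt11Proof.U_eq]
      exact hsub (hball hy)
    · right
      intro y hy hyU
      exact hne ⟨y, hy, hyU⟩
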